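/- Let f, g be differentiable on (a,b) with g' nonvanishing on (a,b), and suppose f(x) → 0 and g(x) → 0 as x → b⁻. If f'/g' is decreasing on (a,b), then f/g is decreasing on (a,b). -/

import Mathlib

open Set Filter

theorem lhospital_antitone_rule_zero_at_right (a b : ℝ) (hab : a < b) (f g : ℝ → ℝ)
    (hf : ∀ x ∈ Ioo a b, DifferentiableAt ℝ f x)
    (hg : ∀ x ∈ Ioo a b, DifferentiableAt ℝ g x)
    (hg' : ∀ x ∈ Ioo a b, deriv g x ≠ 0)
    (hfb : Tendsto f (nhdsWithin b (Iio b)) (nhds 0))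
    (hgb : Tendsto g (nhdsWithin b (Iio b)) (nhds 0))
    (hanti : AntitoneOn (fun x => deriv f x / deriv g x) (Ioo a b)) :
    AntitoneOn (fun x => f x / g x) (Ioo a b) := by
  have gcont : ContinuousOn g (Ioo a b) := fun t ht => (hg t ht).continuousAt.continuousWithinAt
  have fcont : ContinuousOn f (Ioo a b) := fun t ht => (hf t ht).continuousAt.continuousWithinAt
  -- Darboux: deriv g has constant sign
  have hsign : (∀ x ∈ Ioo a b, deriv g x < 0) ∨ ∀ x ∈ Ioo a b, 0 < deriv g x :=
    hasDerivWithinAt_forall_lt_or_forall_gt_of_forall_ne (convex_Ioo a b)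
      (fun x hx => (hg x hx).hasDerivAt.hasDerivWithinAt) hg'
  -- main sign facts
  have main : (∀ x ∈ Ioo a b, g x ≠ 0) ∧
      (∀ x ∈ Ioo a b, ∀ y ∈ Ioo a b, x < y → g x ≠ g y) ∧
      (∀ x ∈ Ioo a b, g x * deriv g x < 0) := by
    rcases hsign with h | h
    · have hA : StrictAntiOn g (Ioo a b) :=
        strictAntiOn_of_deriv_neg (convex_Ioo a b) gcont
          (fun x hx => h x (by rwa [interior_Ioo] at hx))
      have hpos : ∀ x ∈ Ioo a b, 0 < g x := by
        intro x hx
        set y := (x + b) / 2 with hy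
        have hyI : y ∈ Ioo a b := ⟨by simp only [hy]; nlinarith [hx.1, hx.2], by simp only [hy]; linarith [hx.2]⟩
        have hxy : x < y := by simp only [hy]; linarith [hx.2]
        have h1 : g y < g x := hA hx hyI hxy
        have h2 : 0 ≤ g y := by
          refine le_of_tendsto hgb ?_
          filter_upwards [Ioo_mem_nhdsLT_of_mem (by exact ⟨hyI.2, le_refl b⟩ : b ∈ Ioc y b)]
            with z hz
          exact (hA hyI ⟨hyI.1.trans hz.1, hz.2⟩ hz.1).le
        linarith
      exact ⟨fun x hx => (hpos x hx).ne',
        fun x hx y hy hxy => (hA hx hy hxy).ne',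
        fun x hx => mul_neg_of_pos_of_neg (hpos x hx) (h x hx)⟩
    · have hA : StrictMonoOn g (Ioo a b) :=
        strictMonoOn_of_deriv_pos (convex_Ioo a b) gcont
          (fun x hx => h x (by rwa [interior_Ioo] at hx))
      have hneg : ∀ x ∈ Ioo a b, g x < 0 := by
        intro x hx
        set y := (x + b) / 2 with hy
        have hyI : y ∈ Ioo a b := ⟨by simp only [hy]; nlinarith [hx.1, hx.2], by simp only [hy]; linarith [hx.2]⟩
        have hxy : x < y := by simp only [hy]; linarith [hx.2]
        have h1 : g x < g y := hA hx hyI hxy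
        have h2 : g y ≤ 0 := by
          refine ge_of_tendsto hgb ?_
          filter_upwards [Ioo_mem_nhdsLT_of_mem (by exact ⟨hyI.2, le_refl b⟩ : b ∈ Ioc y b)]
            with z hz
          exact (hA hyI ⟨hyI.1.trans hz.1, hz.2⟩ hz.1).le
        linarith
      exact ⟨fun x hx => (hneg x hx).ne,
        fun x hx y hy hxy => (hA hx hy hxy).ne,
        fun x hx => mul_neg_of_neg_of_pos (hneg x hx) (h x hx)⟩
  obtain ⟨hgx0, hinj, hprod⟩ := main
  -- key inequality: f x / g x ≤ f' x / g' x
  have hkey : ∀ x ∈ Ioo a b, f x / g x ≤ deriv f x / deriv g x := by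
    intro x hx
    have hbound : ∀ y ∈ Ioo x b, (f y - f x) / (g y - g x) ≤ deriv f x / deriv g x := by
      intro y hy
      have hyI : y ∈ Ioo a b := ⟨hx.1.trans hy.1, hy.2⟩
      have hsub : Icc x y ⊆ Ioo a b := Icc_subset_Ioo hx.1 hy.2
      have hsub' : Ioo x y ⊆ Ioo a b := fun z hz => ⟨hx.1.trans hz.1, hz.2.trans hy.2⟩
      obtain ⟨c, hc, hceq⟩ :=
        exists_ratio_hasDerivAt_eq_ratio_slope f (deriv f) hy.1
          (fcont.mono hsub) (fun z hz => (hf z (hsub' hz)).hasDerivAt)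
          g (deriv g) (gcont.mono hsub) (fun z hz => (hg z (hsub' hz)).hasDerivAt)
      have hcI : c ∈ Ioo a b := hsub' hc
      have hgne : g y - g x ≠ 0 := sub_ne_zero.2 (hinj x hx y hyI hy.1).symm
      have heq : (f y - f x) / (g y - g x) = deriv f c / deriv g c := by
        rw [div_eq_div_iff hgne (hg' c hcI)]
        linarith [hceq]
      rw [heq]
      exact hanti hx hcI hc.1.le
    have hT : Tendsto (fun y => (f y - f x) / (g y - g x)) (nhdsWithin b (Iio b))
        (nhds (f x / g x)) := by
      have h1 : Tendsto (fun y => f y - f x) (nhdsWithin b (Iio b)) (nhds (0 - f x)) :=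
        hfb.sub_const _
      have h2 : Tendsto (fun y => g y - g x) (nhdsWithin b (Iio b)) (nhds (0 - g x)) :=
        hgb.sub_const _
      have h3 := h1.div h2 (by simpa using neg_ne_zero.2 (hgx0 x hx))
      simpa [zero_sub, neg_div_neg_eq] using
        (show Tendsto (fun y => (f y - f x) / (g y - g x)) _ _ from h3)
    refine le_of_tendsto hT ?_
    filter_upwards [Ioo_mem_nhdsLT_of_mem (⟨hx.2, le_refl b⟩ : b ∈ Ioc x b)] with y hy
    exact hbound y hy
  -- conclude via nonpositive derivative
  have := antitoneOn_of_deriv_nonpos (convex_Ioo a b) (f := fun x => f x / g x)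
    (fcont.div gcont hgx0)
    (by
      rw [interior_Ioo]
      exact fun x hx => ((hf x hx).div (hg x hx) (hgx0 x hx)).differentiableWithinAt)
    (by
      rw [interior_Ioo]
      intro x hx
      rw [show (fun x => f x / g x) = f / g from rfl, deriv_div (hf x hx) (hg x hx) (hgx0 x hx)]
      have hgx := hgx0 x hx
      have hg'x := hg' x hx
      have hId : deriv f x * g x - f x * deriv g x
          = (g x * deriv g x) * (deriv f x / deriv g x - f x / g x) := by
        field_simp
      have hN : deriv f x * g x - f x * deriv g x ≤ 0 := by
        rw [hId]
        exact mul_nonpos_of_nonpos_of_nonneg (hprod x hx).le (sub_nonneg.2 (hkey x hx))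
      exact div_nonpos_of_nonpos_of_nonneg hN (sq_nonneg _))
  exact this
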